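/- The DPG solution is a residual minimizer: u_h ∈ U_h satisfies b(u_h, Tw) = l(Tw) for all w ∈ U_h if and only if u_h minimizes ‖R_V^{-1}(l - B u)‖_V over u ∈ U_h, where l ∈ V' and B is the operator induced by b. -/

import Mathlib

open RealInnerProductSpace

/-- The DPG solution is a residual minimizer: `u_h ∈ U_h` satisfies
`b(u_h, Tw) = l(Tw)` for all `w ∈ U_h` iff `u_h` minimizes
`‖R_V⁻¹(l − B u)‖_V` over `u ∈ U_h`. -/
theorem dpg_iff_residual_minimizer
    (U V : Type*) [NormedAddCommGroup U] [InnerProductSpace ℝ U]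
    [NormedAddCommGroup V] [InnerProductSpace ℝ V] [CompleteSpace V]
    (b : U →L[ℝ] V →L[ℝ] ℝ) (l : V →L[ℝ] ℝ)
    (T : U → V) (hT : ∀ u : U, T u = (InnerProductSpace.toDual ℝ V).symm (b u))
    (Uh : Submodule ℝ U) [FiniteDimensional ℝ Uh]
    (uh : U) (huh : uh ∈ Uh) :
    (∀ w ∈ Uh, b uh (T w) = l (T w)) ↔
      (∀ u ∈ Uh,
        ‖(InnerProductSpace.toDual ℝ V).symm (l - b uh)‖ ≤
          ‖(InnerProductSpace.toDual ℝ V).symm (l - b u)‖) := by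
  set D := (InnerProductSpace.toDual ℝ V).symm with hD
  set r : V := D l with hr
  have hmap : ∀ u : U, D (b u) = T u := fun u => (hT u).symm
  have hadd : ∀ f : V →L[ℝ] ℝ, D (l - f) = r - D f := fun f => by
    simp [hD, hr, map_sub]
  have hin : ∀ (f : V →L[ℝ] ℝ) (v : V), (inner ℝ (D f) v : ℝ) = f v := fun f v =>
    InnerProductSpace.toDual_symm_apply
  have hEq : ∀ v : V, (inner ℝ (r - T uh) v : ℝ) = l v - b uh v := fun v => by
    rw [inner_sub_left, hr, hin, ← hmap uh, hin]
  constructor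
  · intro h u hu
    have horth : (inner ℝ (r - T uh) (T uh - T u) : ℝ) = 0 := by
      rw [hEq, map_sub, map_sub, h uh huh, h u hu]
      ring
    have hdecomp : r - D (b u) = (r - T uh) + (T uh - T u) := by
      rw [hmap u]; abel
    rw [hadd, hadd, hmap uh, hdecomp]
    have hpyth : ‖(r - T uh) + (T uh - T u)‖^2 = ‖r - T uh‖^2 + ‖T uh - T u‖^2 := by
      rw [norm_add_sq_real, horth]; ring
    calc ‖r - T uh‖ = Real.sqrt (‖r - T uh‖^2) := by
          rw [Real.sqrt_sq (norm_nonneg _)]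
      _ ≤ Real.sqrt (‖r - T uh‖^2 + ‖T uh - T u‖^2) := by
          apply Real.sqrt_le_sqrt; nlinarith [sq_nonneg ‖T uh - T u‖]
      _ = ‖(r - T uh) + (T uh - T u)‖ := by
          rw [← hpyth, Real.sqrt_sq (norm_nonneg _)]
  · intro h w hw
    set e : V := r - T uh with he
    set c : ℝ := inner ℝ e (T w) with hc
    have hkey : ∀ t : ℝ, ‖e‖^2 ≤ ‖e‖^2 - 2 * t * c + t^2 * ‖T w‖^2 := by
      intro t
      have hmem : uh + t • w ∈ Uh := Uh.add_mem huh (Uh.smul_mem t hw)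
      have hle := h (uh + t • w) hmem
      rw [hadd, hadd, hmap uh, ← he] at hle
      have hDb : D (b (uh + t • w)) = T uh + t • T w := by
        rw [hmap, hT, hT, hT]
        simp [map_add, map_smul]
      rw [hDb] at hle
      have heq : r - (T uh + t • T w) = e - t • T w := by rw [he]; abel
      rw [heq] at hle
      have hsq : ‖e‖^2 ≤ ‖e - t • T w‖^2 := by
        nlinarith [norm_nonneg e, norm_nonneg (e - t • T w)]
      calc ‖e‖^2 ≤ ‖e - t • T w‖^2 := hsq
        _ = ‖e‖^2 - 2 * t * c + t^2 * ‖T w‖^2 := by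
            rw [norm_sub_sq_real, inner_smul_right, norm_smul, hc]
            simp [mul_pow]
            ring
    have horth : c = 0 := by
      by_contra hne
      have hcpos : (0:ℝ) < c^2 := by positivity
      rcases eq_or_ne (‖T w‖) 0 with h0 | h0
      · have hk := hkey c
        rw [h0] at hk
        nlinarith
      · set s : ℝ := ‖T w‖^2 with hs
        have hspos : (0:ℝ) < s := by positivity
        have hk := hkey (c / s)
        have hA : 2 * (c / s) * c = 2 * (c^2 / s) := by
          field_simp
        have hB : (c / s)^2 * s = c^2 / s := by
          field_simp
        rw [hA, hB] at hk
        have hd : (0:ℝ) < c^2 / s := div_pos hcpos hspos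
        linarith
    have := hEq (T w)
    rw [← hc, horth] at this
    linarith
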